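/- Let n ≥ 1 be a natural number, κ a real number with 0 ≤ κ ≤ n, b and n_y natural numbers with b ≤ n_y ≤ n, and μ_y ∈ [0,1]. Then the total variation distance between the binomial distribution with n_y − b trials and success probability κ/n and the Poisson distribution with mean κ·μ_y satisfies d_TV(Bin(n_y − b, κ/n), Poi(κ μ_y)) ≤ κ·((b + 1)/n + |n_y/n − μ_y|). -/

import Mathlib

/-- The binomial probability mass function on `ℕ` with `n` trials and success
probability `p`: `k ↦ C(n,k) p^k (1-p)^(n-k)`. -/
noncomputable def binomialPMFReal (n : ℕ) (p : ℝ) (k : ℕ) : ℝ :=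
  (n.choose k : ℝ) * p ^ k * (1 - p) ^ (n - k)

/-- The Poisson probability mass function on `ℕ` with mean `λ`:
`k ↦ e^(-λ) λ^k / k!`. -/
noncomputable def poissonPMFReal' (l : ℝ) (k : ℕ) : ℝ :=
  Real.exp (-l) * l ^ k / (Nat.factorial k : ℝ)


namespace SteinTV

/-- partial sum of exp series -/
noncomputable def G (l : ℝ) (j : ℕ) : ℝ := ∑ k ∈ Finset.range (j+1), l^k / (Nat.factorial k : ℝ)

noncomputable def poi (l : ℝ) (k : ℕ) : ℝ := Real.exp (-l) * l ^ k / (Nat.factorial k : ℝ)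

lemma summable_q (l : ℝ) : Summable (fun k : ℕ => l^k / (Nat.factorial k : ℝ)) := by
  simpa using Real.summable_pow_div_factorial l

lemma tsum_q (l : ℝ) : ∑' k : ℕ, l^k / (Nat.factorial k : ℝ) = Real.exp l := by
  rw [Real.exp_eq_exp_ℝ, NormedSpace.exp_eq_tsum_div]

lemma G_le_exp {l : ℝ} (hl : 0 ≤ l) (j : ℕ) : G l j ≤ Real.exp l := by
  rw [← tsum_q l]
  exact Summable.sum_le_tsum _ (fun k _ => by positivity) (summable_q l)

lemma tail_q {l : ℝ} (j : ℕ) : ∑' s : ℕ, l^(s + (j+1)) / (Nat.factorial (s + (j+1)) : ℝ)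
    = Real.exp l - G l j := by
  have h := Summable.sum_add_tsum_nat_add (j+1) (summable_q l)
  rw [tsum_q] at h
  rw [← h, G]
  ring

end SteinTV

namespace SteinTV2
open SteinTV

noncomputable def U (l : ℝ) (j : ℕ) : ℝ := (Nat.factorial j : ℝ) / l^(j+1) * G l j

noncomputable def W (l : ℝ) (j : ℕ) : ℝ :=
  ∑' s : ℕ, (Nat.factorial j : ℝ) * l^s / (Nat.factorial (j+1+s) : ℝ)

lemma summable_W {l : ℝ} (hl : 0 ≤ l) (j : ℕ) :
    Summable (fun s : ℕ => (Nat.factorial j : ℝ) * l^s / (Nat.factorial (j+1+s) : ℝ)) := by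
  apply Summable.of_nonneg_of_le (fun s => by positivity) _ (summable_q l)
  intro s
  rw [div_le_div_iff₀ (by positivity) (by positivity)]
  have h1 : (Nat.factorial j : ℝ) * (Nat.factorial s : ℝ) ≤ (Nat.factorial (j+1+s) : ℝ) := by
    have := Nat.factorial_mul_factorial_dvd_factorial_add j s
    have h2 : j.factorial * s.factorial ≤ (j + s).factorial := Nat.le_of_dvd (Nat.factorial_pos _) this
    have h3 : (j + s).factorial ≤ (j + 1 + s).factorial := by
      apply Nat.factorial_le; omega
    exact_mod_cast le_trans h2 h3
  calc (Nat.factorial j : ℝ) * l^s * (Nat.factorial s : ℝ)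
      = l^s * ((Nat.factorial j : ℝ) * (Nat.factorial s : ℝ)) := by ring
    _ ≤ l^s * (Nat.factorial (j+1+s) : ℝ) := by
        apply mul_le_mul_of_nonneg_left h1 (by positivity)
    _ = l^s * (Nat.factorial (j+1+s) : ℝ) := rfl

lemma W_eq {l : ℝ} (hl : 0 < l) (j : ℕ) :
    W l j = (Nat.factorial j : ℝ) / l^(j+1) * (Real.exp l - G l j) := by
  rw [W, ← tail_q j, ← tsum_mul_left]
  congr 1; ext s
  rw [pow_add]
  field_simp
  ring

lemma U_mono {l : ℝ} (hl : 0 < l) (j : ℕ) : U l j ≤ U l (j+1) := by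
  unfold U G
  have key : ∀ k ∈ Finset.range (j+1),
      (Nat.factorial j : ℝ) / l^(j+1) * (l^k / (Nat.factorial k : ℝ))
      ≤ (Nat.factorial (j+1) : ℝ) / l^(j+2) * (l^(k+1) / (Nat.factorial (k+1) : ℝ)) := by
    intro k hk
    simp only [Finset.mem_range] at hk
    have hkj : k ≤ j := by omega
    rw [div_mul_div_comm, div_mul_div_comm, div_le_div_iff₀ (by positivity) (by positivity)]
    have hfac : (Nat.factorial j : ℝ) * (Nat.factorial (k+1) : ℝ)
        ≤ (Nat.factorial (j+1) : ℝ) * (Nat.factorial k : ℝ) := by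
      have : j.factorial * (k+1).factorial ≤ (j+1).factorial * k.factorial := by
        rw [Nat.factorial_succ (j), Nat.factorial_succ k]
        calc j.factorial * ((k+1) * k.factorial) = (k+1) * (j.factorial * k.factorial) := by ring
          _ ≤ (j+1) * (j.factorial * k.factorial) := by
              apply Nat.mul_le_mul_right; omega
          _ = (j+1) * j.factorial * k.factorial := by ring
      exact_mod_cast this
    calc (Nat.factorial j : ℝ) * l^k * (l^(j+2) * (Nat.factorial (k+1) : ℝ))
        = ((Nat.factorial j : ℝ) * (Nat.factorial (k+1) : ℝ)) * (l^k * l^(j+2)) := by ring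
      _ ≤ ((Nat.factorial (j+1) : ℝ) * (Nat.factorial k : ℝ)) * (l^k * l^(j+2)) := by
          apply mul_le_mul_of_nonneg_right hfac (by positivity)
      _ = (Nat.factorial (j+1) : ℝ) * l^(k+1) * (l^(j+1) * (Nat.factorial k : ℝ)) := by ring
  calc (Nat.factorial j : ℝ) / l^(j+1) * ∑ k ∈ Finset.range (j+1), l^k / (Nat.factorial k : ℝ)
      = ∑ k ∈ Finset.range (j+1), (Nat.factorial j : ℝ) / l^(j+1) * (l^k / (Nat.factorial k : ℝ)) := by
        rw [Finset.mul_sum]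
    _ ≤ ∑ k ∈ Finset.range (j+1), (Nat.factorial (j+1) : ℝ) / l^(j+2) * (l^(k+1) / (Nat.factorial (k+1) : ℝ)) :=
        Finset.sum_le_sum key
    _ ≤ ∑ k ∈ Finset.range (j+2), (Nat.factorial (j+1) : ℝ) / l^(j+2) * (l^k / (Nat.factorial k : ℝ)) := by
        rw [Finset.sum_range_succ' (fun k => (Nat.factorial (j+1) : ℝ) / l^(j+2) * (l^k / (Nat.factorial k : ℝ))) (j+1)]
        simp only [le_add_iff_nonneg_right]
        positivity
    _ = (Nat.factorial (j+1) : ℝ) / l^(j+1+1) * ∑ k ∈ Finset.range (j+1+1), l^k / (Nat.factorial k : ℝ) := by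
        rw [Finset.mul_sum]

lemma W_anti {l : ℝ} (hl : 0 ≤ l) (j : ℕ) : W l (j+1) ≤ W l j := by
  apply Summable.tsum_le_tsum _ (summable_W hl (j+1)) (summable_W hl j)
  intro s
  rw [div_le_div_iff₀ (by positivity) (by positivity)]
  have hfac : (Nat.factorial (j+1) : ℝ) * (Nat.factorial (j+1+s) : ℝ)
      ≤ (Nat.factorial j : ℝ) * (Nat.factorial (j+1+1+s) : ℝ) := by
    have : (j+1).factorial * (j+1+s).factorial ≤ j.factorial * (j+2+s).factorial := by
      rw [Nat.factorial_succ j, show j+2+s = (j+1+s)+1 by omega, Nat.factorial_succ (j+1+s)]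
      calc (j+1) * j.factorial * (j+1+s).factorial
          ≤ (j+1+s+1) * j.factorial * (j+1+s).factorial := by
            apply Nat.mul_le_mul_right; apply Nat.mul_le_mul_right; omega
        _ = j.factorial * ((j+1+s+1) * (j+1+s).factorial) := by ring
    have h2 : j+1+1+s = j+2+s := by omega
    rw [h2]; exact_mod_cast this
  calc (Nat.factorial (j+1) : ℝ) * l^s * (Nat.factorial (j+1+s) : ℝ)
      = ((Nat.factorial (j+1) : ℝ) * (Nat.factorial (j+1+s) : ℝ)) * l^s := by ring
    _ ≤ ((Nat.factorial j : ℝ) * (Nat.factorial (j+1+1+s) : ℝ)) * l^s := by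
        apply mul_le_mul_of_nonneg_right hfac (by positivity)
    _ = (Nat.factorial j : ℝ) * l^s * (Nat.factorial (j+1+1+s) : ℝ) := by ring

end SteinTV2

namespace SteinTV3
open SteinTV SteinTV2

noncomputable def f1 (l : ℝ) (i : ℕ) : ℕ → ℝ
  | 0 => 0
  | (j+1) => (Nat.factorial j : ℝ) / l^(j+1) *
      ((if i ≤ j then l^i / (Nat.factorial i : ℝ) else 0) - poi l i * G l j)

lemma poi_nonneg {l : ℝ} (hl : 0 ≤ l) (k : ℕ) : 0 ≤ poi l k := by
  unfold poi; positivity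

lemma stein_eq {l : ℝ} (hl : 0 < l) (i j : ℕ) :
    l * f1 l i (j+1) - j * f1 l i j = (if j = i then 1 else 0) - poi l i := by
  have hl' : l ≠ 0 := ne_of_gt hl
  cases j with
  | zero =>
    simp only [f1, Nat.factorial_zero, Nat.cast_zero, Nat.cast_one, zero_mul, sub_zero,
      pow_one, G, Finset.range_one, Finset.sum_singleton, pow_zero, Nat.factorial_zero]
    rw [show ((if i ≤ 0 then l^i / (Nat.factorial i : ℝ) else 0)) =
        (if (0 : ℕ) = i then 1 else 0) from ?_]
    · field_simp
      simp
    · by_cases h : i = 0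
      · subst h; simp
      · rw [if_neg (by omega), if_neg (by omega)]
  | succ j =>
    simp only [f1]
    have hG : G l (j+1) = G l j + l^(j+1) / (Nat.factorial (j+1) : ℝ) := by
      unfold G; rw [Finset.sum_range_succ]
    have hind : (if i ≤ j+1 then l^i / (Nat.factorial i : ℝ) else 0) =
        (if i ≤ j then l^i / (Nat.factorial i : ℝ) else 0)
        + (if (j+1 : ℕ) = i then l^(j+1) / (Nat.factorial (j+1) : ℝ) else 0) := by
      rcases Nat.lt_trichotomy i (j+1) with h | h | h
      · rw [if_pos (by omega), if_pos (by omega), if_neg (by omega), add_zero]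
      · subst h; rw [if_pos le_rfl, if_neg (by omega), if_pos rfl, zero_add]
      · rw [if_neg (by omega), if_neg (by omega), if_neg (by omega), add_zero]
    rw [hG, hind]
    have hfacpos : (0:ℝ) < (Nat.factorial j : ℝ) := by exact_mod_cast Nat.factorial_pos j
    have hfacpos1 : (0:ℝ) < (Nat.factorial (j+1) : ℝ) := by exact_mod_cast Nat.factorial_pos (j+1)
    have hfs' : ((Nat.factorial (j+1) : ℕ) : ℝ) = ((j:ℝ)+1) * (Nat.factorial j : ℝ) := by
      exact_mod_cast Nat.factorial_succ j
    by_cases h : (j+1 : ℕ) = i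
    · rw [if_pos h, if_pos h, if_neg (by omega : ¬ i ≤ j)]
      field_simp
      rw [hfs']
      push_cast
      ring
    · rw [if_neg h, if_neg h]
      by_cases h2 : i ≤ j
      · rw [if_pos h2]
        have h4 : (Nat.factorial i : ℝ) ≠ 0 := by exact_mod_cast (Nat.factorial_pos i).ne'
        field_simp
        rw [hfs']
        push_cast
        ring
      · rw [if_neg h2]
        field_simp
        rw [hfs']
        push_cast
        ring

lemma rep_gt {l : ℝ} (i j : ℕ) (h : j < i) : f1 l i (j+1) = -(poi l i) * U l j := by
  simp only [f1, if_neg (by omega : ¬ i ≤ j), U]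
  ring

lemma rep_le {l : ℝ} (hl : 0 < l) (i j : ℕ) (h : i ≤ j) : f1 l i (j+1) = poi l i * W l j := by
  have hq : l^i / (Nat.factorial i : ℝ) = Real.exp l * poi l i := by
    unfold poi
    rw [Real.exp_neg]
    have := (Real.exp_pos l).ne'
    field_simp
  simp only [f1, if_pos h, hq, W_eq hl]
  ring

lemma G_ratio {l : ℝ} (hl : 0 ≤ l) (i : ℕ) :
    l / (i+1) * G l i ≤ G l (i+1) := by
  have : l / (i+1) * G l i = ∑ k ∈ Finset.range (i+1), l^(k+1) / ((i+1) * (Nat.factorial k : ℝ)) := by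
    unfold G; rw [Finset.mul_sum]
    congr 1; ext k
    rw [pow_succ]
    field_simp
  rw [this]
  have step : ∑ k ∈ Finset.range (i+1), l^(k+1) / ((i+1) * (Nat.factorial k : ℝ))
      ≤ ∑ k ∈ Finset.range (i+1), l^(k+1) / (Nat.factorial (k+1) : ℝ) := by
    apply Finset.sum_le_sum
    intro k hk
    simp only [Finset.mem_range] at hk
    apply div_le_div_of_nonneg_left (by positivity) (by positivity)
    have : (k+1).factorial = (k+1) * k.factorial := Nat.factorial_succ k
    have hle : ((k+1).factorial : ℝ) ≤ ((i+1) : ℝ) * (Nat.factorial k : ℝ) := by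
      rw [this]
      push_cast
      apply mul_le_mul_of_nonneg_right _ (by positivity)
      · exact_mod_cast (by omega : (k+1 : ℕ) ≤ i+1)
    exact hle
  apply le_trans step
  unfold G
  rw [Finset.sum_range_succ' (fun k => l^k / (Nat.factorial k : ℝ)) (i+1)]
  simp only [pow_zero, Nat.factorial_zero, Nat.cast_one]
  have : (0:ℝ) ≤ 1/1 := by norm_num
  linarith [this]

lemma S_bound {l : ℝ} (hl : 0 < l) (i : ℕ) (hi : 1 ≤ i) :
    poi l i * (W l i + U l (i-1)) ≤ 1/l := by
  obtain ⟨i', rfl⟩ : ∃ i', i = i'+1 := ⟨i-1, by omega⟩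
  simp only [Nat.add_sub_cancel]
  have hWi : poi l (i'+1) * W l (i'+1) = Real.exp (-l)/l * (Real.exp l - G l (i'+1)) := by
    rw [W_eq hl]
    unfold poi
    have h1 : (Nat.factorial (i'+1) : ℝ) ≠ 0 := by
      exact_mod_cast (Nat.factorial_pos (i'+1)).ne'
    field_simp
    ring
  have hUi : poi l (i'+1) * U l i' = Real.exp (-l) / (i'+1) * G l i' := by
    unfold poi U
    have h1 : (Nat.factorial (i'+1) : ℝ) = (i'+1) * (Nat.factorial i' : ℝ) := by
      exact_mod_cast Nat.factorial_succ i'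
    rw [h1]
    have h2 : (Nat.factorial i' : ℝ) ≠ 0 := by exact_mod_cast (Nat.factorial_pos i').ne'
    field_simp
  rw [mul_add, hWi, hUi]
  have hratio := G_ratio (le_of_lt hl) i'
  have hexp : Real.exp (-l) * Real.exp l = 1 := by rw [← Real.exp_add]; simp
  have hepos : 0 < Real.exp (-l) := Real.exp_pos _
  have key : (Real.exp l - G l (i'+1)) + l/(i'+1) * G l i' ≤ Real.exp l := by linarith
  have h3 : Real.exp (-l)/l * (Real.exp l - G l (i'+1)) + Real.exp (-l)/(i'+1) * G l i'
      = Real.exp (-l)/l * ((Real.exp l - G l (i'+1)) + l/(i'+1) * G l i') := by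
    field_simp
  rw [h3]
  calc Real.exp (-l)/l * ((Real.exp l - G l (i'+1)) + l/(i'+1) * G l i')
      ≤ Real.exp (-l)/l * Real.exp l := by
        apply mul_le_mul_of_nonneg_left key (by positivity)
    _ = 1/l := by
        rw [Real.exp_neg]
        have := (Real.exp_pos l).ne'
        field_simp

lemma f1_delta {l : ℝ} (hl : 0 < l) (i j : ℕ) (hj : 1 ≤ j) :
    f1 l i (j+1) - f1 l i j ≤ if i = j then 1/l else 0 := by
  obtain ⟨j', rfl⟩ : ∃ j', j = j'+1 := ⟨j-1, by omega⟩
  rcases Nat.lt_trichotomy i (j'+1) with h | h | h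
  · rw [if_neg (by omega)]
    rw [rep_le hl i (j'+1) (by omega), rep_le hl i j' (by omega)]
    have := W_anti (le_of_lt hl) j'
    have := poi_nonneg (le_of_lt hl) (l := l) i
    nlinarith
  · subst h
    rw [if_pos rfl]
    rw [rep_le hl (j'+1) (j'+1) le_rfl]
    have hexp : f1 l (j'+1) (j'+1) = -(poi l (j'+1)) * U l j' := rep_gt (j'+1) j' (by omega)
    rw [hexp]
    have hS := S_bound hl (j'+1) (by omega)
    simp only [Nat.add_sub_cancel] at hS
    nlinarith [hS]
  · rw [if_neg (by omega)]
    rw [rep_gt i (j'+1) (by omega), rep_gt i j' (by omega)]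
    have := U_mono hl j'
    have := poi_nonneg (le_of_lt hl) (l := l) i
    nlinarith

end SteinTV3

namespace BinTV
open SteinTV SteinTV2 SteinTV3 Finset

lemma bin_nonneg {p : ℝ} (h0 : 0 ≤ p) (h1 : p ≤ 1) (m k : ℕ) : 0 ≤ binomialPMFReal m p k := by
  unfold binomialPMFReal
  have : (0:ℝ) ≤ 1 - p := by linarith
  positivity

lemma bin_sum {p : ℝ} (m : ℕ) : ∑ k ∈ range (m+1), binomialPMFReal m p k = 1 := by
  have h := add_pow p (1-p) m
  have h2 : (p + (1-p))^m = 1 := by norm_num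
  rw [h2] at h
  rw [h]
  apply Finset.sum_congr rfl
  intro k _
  unfold binomialPMFReal
  ring

lemma bin_eq_zero {p : ℝ} {m k : ℕ} (h : m < k) : binomialPMFReal m p k = 0 := by
  unfold binomialPMFReal
  rw [Nat.choose_eq_zero_of_lt h]
  simp

lemma idA {p : ℝ} (m' : ℕ) (g : ℕ → ℝ) :
    ∑ k ∈ range (m'+2), (k:ℝ) * binomialPMFReal (m'+1) p k * g k
      = ((m':ℝ)+1) * p * ∑ k ∈ range (m'+1), binomialPMFReal m' p k * g (k+1) := by
  rw [Finset.sum_range_succ' (fun k => (k:ℝ) * binomialPMFReal (m'+1) p k * g k) (m'+1)]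
  simp only [Nat.cast_zero, zero_mul, add_zero]
  rw [Finset.mul_sum]
  apply Finset.sum_congr rfl
  intro k hk
  simp only [Finset.mem_range] at hk
  unfold binomialPMFReal
  have hch : ((k:ℝ)+1) * ((m'+1).choose (k+1) : ℝ) = ((m':ℝ)+1) * (m'.choose k : ℝ) := by
    have := Nat.add_one_mul_choose_eq m' k
    have h2 : (m'+1) * m'.choose k = (m'+1).choose (k+1) * (k+1) := this
    exact_mod_cast by
      calc (k+1) * (m'+1).choose (k+1) = (m'+1).choose (k+1) * (k+1) := Nat.mul_comm _ _
        _ = (m'+1) * m'.choose k := h2.symm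
  have hexp : m'+1 - (k+1) = m' - k := by omega
  rw [hexp]
  push_cast
  push_cast at hch
  calc ((k:ℝ)+1) * (((m'+1).choose (k+1) : ℝ) * p^(k+1) * (1-p)^(m'-k)) * g (k+1)
      = (((k:ℝ)+1) * ((m'+1).choose (k+1) : ℝ)) * (p^(k+1) * (1-p)^(m'-k) * g (k+1)) := by ring
    _ = (((m':ℝ)+1) * (m'.choose k : ℝ)) * (p^(k+1) * (1-p)^(m'-k) * g (k+1)) := by rw [hch]
    _ = ((m':ℝ)+1) * p * ((m'.choose k : ℝ) * p^k * (1-p)^(m'-k) * g (k+1)) := by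
        rw [pow_succ]; ring

lemma pascal {p : ℝ} (m' k : ℕ) (hk : k ≤ m') :
    binomialPMFReal (m'+1) p (k+1)
      = p * binomialPMFReal m' p k + (1-p) * binomialPMFReal m' p (k+1) := by
  unfold binomialPMFReal
  have hch : ((m'+1).choose (k+1) : ℝ) = (m'.choose k : ℝ) + (m'.choose (k+1) : ℝ) := by
    exact_mod_cast Nat.choose_succ_succ m' k
  rw [hch]
  rcases Nat.lt_or_ge k m' with h | h
  · have e1 : m'+1-(k+1) = m'-k := by omega
    have e2 : m'-k = (m'-(k+1)) + 1 := by omega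
    rw [e1, e2, pow_succ, pow_succ]
    ring
  · have hk' : k = m' := by omega
    subst hk'
    rw [Nat.choose_succ_self, Nat.cast_zero]
    have e3 : k + 1 - (k+1) = 0 := by omega
    rw [e3]
    simp only [Nat.sub_self, pow_zero]
    ring

lemma idB {p : ℝ} (m' : ℕ) (g : ℕ → ℝ) :
    ∑ k ∈ range (m'+2), binomialPMFReal (m'+1) p k * g (k+1)
      = ∑ k ∈ range (m'+1), binomialPMFReal m' p k * ((1-p) * g (k+1) + p * g (k+2)) := by
  rw [Finset.sum_range_succ' (fun k => binomialPMFReal (m'+1) p k * g (k+1)) (m'+1)]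
  have hstep : ∀ k ∈ range (m'+1),
      binomialPMFReal (m'+1) p (k+1) * g (k+2)
        = p * binomialPMFReal m' p k * g (k+2) + (1-p) * (binomialPMFReal m' p (k+1) * g (k+2)) := by
    intro k hk
    simp only [Finset.mem_range] at hk
    rw [pascal m' k (by omega)]
    ring
  rw [Finset.sum_congr rfl hstep, Finset.sum_add_distrib, ← Finset.mul_sum]
  have hshift : ∑ k ∈ range (m'+1), binomialPMFReal m' p (k+1) * g (k+2)
      = ∑ k ∈ range (m'+1), binomialPMFReal m' p k * g (k+1) - binomialPMFReal m' p 0 * g 1 := by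
    have h1 : ∑ k ∈ range (m'+2), binomialPMFReal m' p k * g (k+1)
        = ∑ k ∈ range (m'+1), binomialPMFReal m' p (k+1) * g (k+2) + binomialPMFReal m' p 0 * g 1 :=
      Finset.sum_range_succ' (fun k => binomialPMFReal m' p k * g (k+1)) (m'+1)
    have h2 : ∑ k ∈ range (m'+2), binomialPMFReal m' p k * g (k+1)
        = ∑ k ∈ range (m'+1), binomialPMFReal m' p k * g (k+1)
          + binomialPMFReal m' p (m'+1) * g (m'+2) := Finset.sum_range_succ _ _
    rw [bin_eq_zero (by omega)] at h2
    simp only [zero_mul, add_zero] at h2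
    linarith [h1, h2.symm]
  have hbin0 : binomialPMFReal (m'+1) p 0 = (1-p) * binomialPMFReal m' p 0 := by
    unfold binomialPMFReal
    simp [pow_succ]
    ring
  rw [hshift, hbin0]
  rw [Finset.sum_congr rfl (fun k _ => by ring : ∀ k ∈ range (m'+1),
    binomialPMFReal m' p k * ((1-p) * g (k+1) + p * g (k+2))
      = (1-p) * (binomialPMFReal m' p k * g (k+1)) + p * binomialPMFReal m' p k * g (k+2))]
  rw [Finset.sum_add_distrib, ← Finset.mul_sum]
  simp only [zero_add]
  ring

end BinTV

namespace KeyTV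
open SteinTV SteinTV2 SteinTV3 BinTV Finset

lemma key {p : ℝ} (m' : ℕ) (hp : 0 < p) (hp1 : p ≤ 1) (A : Finset ℕ) (hA : A ⊆ range (m'+2)) :
    ∑ k ∈ A, binomialPMFReal (m'+1) p k - ∑ k ∈ A, poi (((m':ℝ)+1)*p) k ≤ p := by
  set l : ℝ := ((m':ℝ)+1)*p with hldef
  have hl : 0 < l := by positivity
  set f : ℕ → ℝ := fun j => ∑ i ∈ A, f1 l i j with hfdef
  have steinA : ∀ k : ℕ, l * f (k+1) - (k:ℝ) * f k
      = (if k ∈ A then 1 else 0) - ∑ i ∈ A, poi l i := by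
    intro k
    have h1 : l * f (k+1) - (k:ℝ) * f k = ∑ i ∈ A, (l * f1 l i (k+1) - (k:ℝ) * f1 l i k) := by
      simp only [hfdef, Finset.mul_sum, Finset.sum_sub_distrib]
    rw [h1, Finset.sum_congr rfl (fun i _ => stein_eq hl i k), Finset.sum_sub_distrib]
    congr 1
    exact Finset.sum_ite_eq A k (fun _ => (1:ℝ))
  -- E computed two ways
  have E1 : ∑ k ∈ range (m'+2), binomialPMFReal (m'+1) p k * (l * f (k+1) - (k:ℝ) * f k)
      = ∑ k ∈ A, binomialPMFReal (m'+1) p k - ∑ i ∈ A, poi l i := by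
    rw [Finset.sum_congr rfl (fun k _ => by rw [steinA k])]
    have hsplit : ∑ k ∈ range (m'+2),
        binomialPMFReal (m'+1) p k * ((if k ∈ A then 1 else 0) - ∑ i ∈ A, poi l i)
        = ∑ k ∈ range (m'+2), (if k ∈ A then binomialPMFReal (m'+1) p k else 0)
          - (∑ i ∈ A, poi l i) * ∑ k ∈ range (m'+2), binomialPMFReal (m'+1) p k := by
      rw [Finset.mul_sum, ← Finset.sum_sub_distrib]
      apply Finset.sum_congr rfl
      intro k _
      by_cases h : k ∈ A
      · rw [if_pos h, if_pos h]; ring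
      · rw [if_neg h, if_neg h]; ring
    rw [hsplit, bin_sum, mul_one]
    congr 1
    rw [Finset.sum_ite_mem, Finset.inter_eq_right.2 hA]
  have E2 : ∑ k ∈ range (m'+2), binomialPMFReal (m'+1) p k * (l * f (k+1) - (k:ℝ) * f k)
      = ((m':ℝ)+1) * p^2 * ∑ k ∈ range (m'+1), binomialPMFReal m' p k * (f (k+2) - f (k+1)) := by
    have hexp : ∑ k ∈ range (m'+2), binomialPMFReal (m'+1) p k * (l * f (k+1) - (k:ℝ) * f k)
        = l * ∑ k ∈ range (m'+2), binomialPMFReal (m'+1) p k * f (k+1)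
          - ∑ k ∈ range (m'+2), (k:ℝ) * binomialPMFReal (m'+1) p k * f k := by
      rw [Finset.mul_sum, ← Finset.sum_sub_distrib]
      apply Finset.sum_congr rfl
      intro k _; ring
    rw [hexp, idB m' f, idA m' f]
    rw [hldef, Finset.mul_sum, Finset.mul_sum, Finset.mul_sum, ← Finset.sum_sub_distrib]
    apply Finset.sum_congr rfl
    intro k _
    ring
  have hdelta : ∀ k ∈ range (m'+1), f (k+2) - f (k+1) ≤ 1/l := by
    intro k _
    have h1 : f (k+2) - f (k+1) = ∑ i ∈ A, (f1 l i (k+2) - f1 l i (k+1)) := by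
      simp only [hfdef, Finset.sum_sub_distrib]
    rw [h1]
    calc ∑ i ∈ A, (f1 l i (k+2) - f1 l i (k+1))
        ≤ ∑ i ∈ A, (if i = k+1 then 1/l else 0) :=
          Finset.sum_le_sum (fun i _ => f1_delta hl i (k+1) (by omega))
      _ = if k+1 ∈ A then 1/l else 0 := Finset.sum_ite_eq' A (k+1) (fun _ => 1/l)
      _ ≤ 1/l := by
          by_cases h : k+1 ∈ A
          · rw [if_pos h]
          · rw [if_neg h]; positivity
  calc ∑ k ∈ A, binomialPMFReal (m'+1) p k - ∑ i ∈ A, poi l i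
      = ((m':ℝ)+1) * p^2 * ∑ k ∈ range (m'+1), binomialPMFReal m' p k * (f (k+2) - f (k+1)) := by
        rw [← E2, E1]
    _ ≤ ((m':ℝ)+1) * p^2 * ∑ k ∈ range (m'+1), binomialPMFReal m' p k * (1/l) := by
        apply mul_le_mul_of_nonneg_left _ (by positivity)
        apply Finset.sum_le_sum
        intro k hk
        exact mul_le_mul_of_nonneg_left (hdelta k hk) (bin_nonneg (le_of_lt hp) hp1 m' k)
    _ = ((m':ℝ)+1) * p^2 * (1/l) := by
        rw [← Finset.sum_mul, bin_sum, one_mul]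
    _ = p := by
        rw [hldef]
        field_simp

end KeyTV

namespace LemB
open SteinTV SteinTV2 SteinTV3 BinTV KeyTV Finset

lemma poi_eq_mul (l : ℝ) (k : ℕ) : poi l k = Real.exp (-l) * (l^k / (Nat.factorial k : ℝ)) := by
  unfold poi; ring

lemma summable_poi (l : ℝ) : Summable (poi l) := by
  have := (summable_q l).mul_left (Real.exp (-l))
  apply this.congr
  intro k
  rw [poi_eq_mul]

lemma tsum_poi (l : ℝ) : ∑' k, poi l k = 1 := by
  calc ∑' k, poi l k = ∑' k, Real.exp (-l) * (l^k / (Nat.factorial k : ℝ)) := by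
        apply tsum_congr; intro k; rw [poi_eq_mul]
    _ = Real.exp (-l) * ∑' k, l^k / (Nat.factorial k : ℝ) := tsum_mul_left
    _ = Real.exp (-l) * Real.exp l := by rw [tsum_q]
    _ = 1 := by rw [← Real.exp_add]; simp

lemma summable_bin (m : ℕ) (p : ℝ) : Summable (binomialPMFReal m p) := by
  apply summable_of_ne_finset_zero (s := range (m+1))
  intro k hk
  simp only [Finset.mem_range] at hk
  exact bin_eq_zero (by omega)

lemma tsum_bin (m : ℕ) (p : ℝ) : ∑' k, binomialPMFReal m p k = 1 := by
  rw [tsum_eq_sum (s := range (m+1)) (fun k hk => bin_eq_zero (by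
    simp only [Finset.mem_range] at hk; omega))]
  exact bin_sum m

lemma bin_degenerate {m : ℕ} {p : ℝ} (h : (m:ℝ) * p = 0) (hp0 : 0 ≤ p) (k : ℕ) :
    binomialPMFReal m p k = poi ((m:ℝ)*p) k := by
  rw [h]
  unfold binomialPMFReal poi
  rcases mul_eq_zero.1 h with hm | hp
  · have hm0 : m = 0 := by exact_mod_cast hm
    subst hm0
    cases k with
    | zero => simp
    | succ k => simp [Nat.choose_eq_zero_of_lt (by omega : 0 < k+1)]
  · subst hp
    cases k with
    | zero => simp
    | succ k => simp [zero_pow]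

lemma lemB (m : ℕ) {p : ℝ} (hp0 : 0 ≤ p) (hp1 : p ≤ 1) :
    ∑' k, |binomialPMFReal m p k - poi ((m:ℝ)*p) k| ≤ 2*p := by
  by_cases hdeg : (m:ℝ) * p = 0
  · calc ∑' k, |binomialPMFReal m p k - poi ((m:ℝ)*p) k| = ∑' k : ℕ, (0:ℝ) := by
          apply tsum_congr; intro k
          rw [bin_degenerate hdeg hp0]; simp
      _ = 0 := tsum_zero
      _ ≤ 2*p := by positivity
  -- nondegenerate: m ≥ 1 and p > 0
  have hm : 1 ≤ m := by
    rcases Nat.eq_zero_or_pos m with h | h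
    · exfalso; apply hdeg; rw [h]; simp
    · omega
  have hp : 0 < p := by
    rcases lt_or_eq_of_le hp0 with h | h
    · exact h
    · exfalso; apply hdeg; rw [← h]; ring
  obtain ⟨m', rfl⟩ : ∃ m', m = m'+1 := ⟨m-1, by omega⟩
  set l : ℝ := ((m'+1:ℕ):ℝ) * p with hldef
  have hl : 0 < l := by positivity
  have hlcast : l = ((m':ℝ)+1) * p := by rw [hldef]; push_cast; ring
  set d : ℕ → ℝ := fun k => binomialPMFReal (m'+1) p k - poi l k with hddef
  have hsum_d : Summable d := (summable_bin (m'+1) p).sub (summable_poi l)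
  have htsum_d : ∑' k, d k = 0 := by
    rw [Summable.tsum_sub (summable_bin (m'+1) p) (summable_poi l), tsum_bin, tsum_poi]
    ring
  have hmax_zero : ∀ k ∉ range (m'+2), max (d k) 0 = 0 := by
    intro k hk
    simp only [Finset.mem_range] at hk
    have h1 : binomialPMFReal (m'+1) p k = 0 := bin_eq_zero (by omega)
    have h2 : 0 ≤ poi l k := poi_nonneg (le_of_lt hl) k
    simp only [hddef, h1, zero_sub, max_eq_right_iff]
    linarith
  have hsum_max : Summable (fun k => max (d k) 0) :=
    summable_of_ne_finset_zero (s := range (m'+2)) hmax_zero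
  have habs : ∀ k, |d k| = 2 * max (d k) 0 - d k := by
    intro k
    rcases le_total (d k) 0 with h | h
    · rw [abs_of_nonpos h, max_eq_right h]; ring
    · rw [abs_of_nonneg h, max_eq_left h]; ring
  have step1 : ∑' k, |d k| = 2 * ∑' k, max (d k) 0 := by
    calc ∑' k, |d k| = ∑' k, (2 * max (d k) 0 - d k) := tsum_congr habs
      _ = 2 * ∑' k, max (d k) 0 - ∑' k, d k := by
          rw [Summable.tsum_sub (hsum_max.mul_left 2) hsum_d, tsum_mul_left]
      _ = 2 * ∑' k, max (d k) 0 := by rw [htsum_d]; ring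
  set A : Finset ℕ := (range (m'+2)).filter (fun k => 0 ≤ d k) with hAdef
  have step2 : ∑' k, max (d k) 0 = ∑ k ∈ A, d k := by
    rw [tsum_eq_sum (s := range (m'+2)) hmax_zero]
    rw [hAdef, Finset.sum_filter]
    apply Finset.sum_congr rfl
    intro k _
    rcases le_total (d k) 0 with h | h
    · rcases lt_or_eq_of_le h with h' | h'
      · rw [max_eq_right h, if_neg (by linarith)]
      · rw [max_eq_right h, if_pos (by linarith), ← h']
    · rw [max_eq_left h, if_pos h]
  have hAsub : A ⊆ range (m'+2) := Finset.filter_subset _ _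
  have step3 : ∑ k ∈ A, d k ≤ p := by
    have h1 : ∑ k ∈ A, d k
        = ∑ k ∈ A, binomialPMFReal (m'+1) p k - ∑ k ∈ A, poi (((m':ℝ)+1)*p) k := by
      rw [← hlcast, Finset.sum_sub_distrib]
    rw [h1]
    exact key m' hp hp1 A hAsub
  rw [step1, step2]
  linarith [step3]

end LemB

namespace PoiPoi
open SteinTV SteinTV2 SteinTV3 LemB Finset

lemma poi_conv (a e : ℝ) (k : ℕ) :
    ∑ j ∈ range (k+1), poi a j * poi e (k-j) = poi (a+e) k := by
  unfold poi
  have hexp : Real.exp (-(a+e)) = Real.exp (-a) * Real.exp (-e) := by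
    rw [← Real.exp_add]; ring_nf
  rw [hexp]
  have hk : (a+e)^k = ∑ j ∈ range (k+1), a^j * e^(k-j) * (k.choose j : ℝ) := add_pow a e k
  have key : ∀ j ∈ range (k+1),
      Real.exp (-a) * a^j / (Nat.factorial j : ℝ) * (Real.exp (-e) * e^(k-j) / (Nat.factorial (k-j) : ℝ))
      = Real.exp (-a) * Real.exp (-e) * (a^j * e^(k-j) * (k.choose j : ℝ)) / (Nat.factorial k : ℝ) := by
    intro j hj
    simp only [Finset.mem_range] at hj
    have hjk : j ≤ k := by omega
    have hfac : (k.choose j : ℝ) * (Nat.factorial j : ℝ) * (Nat.factorial (k-j) : ℝ)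
        = (Nat.factorial k : ℝ) := by
      exact_mod_cast Nat.choose_mul_factorial_mul_factorial hjk
    have h1 : (Nat.factorial j : ℝ) ≠ 0 := by exact_mod_cast (Nat.factorial_pos j).ne'
    have h2 : (Nat.factorial (k-j) : ℝ) ≠ 0 := by exact_mod_cast (Nat.factorial_pos (k-j)).ne'
    have h3 : (Nat.factorial k : ℝ) ≠ 0 := by exact_mod_cast (Nat.factorial_pos k).ne'
    field_simp
    rw [← hfac]
    ring
  rw [Finset.sum_congr rfl key]
  rw [← Finset.sum_div, ← Finset.mul_sum, ← hk]

lemma poi_shift {a e : ℝ} (ha : 0 ≤ a) (he : 0 ≤ e) :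
    ∑' k, |poi (a+e) k - poi a k| ≤ 2*e := by
  have hX : ∀ k, 0 ≤ poi (a+e) k - Real.exp (-e) * poi a k := by
    intro k
    have h1 : poi (a+e) k = ∑ j ∈ range (k+1), poi a j * poi e (k-j) := (poi_conv a e k).symm
    have h2 : ∑ j ∈ range (k+1), poi a j * poi e (k-j)
        = ∑ j ∈ range k, poi a j * poi e (k-j) + poi a k * poi e 0 := by
      rw [Finset.sum_range_succ, Nat.sub_self]
    have h3 : poi e 0 = Real.exp (-e) := by unfold poi; simp
    have h4 : 0 ≤ ∑ j ∈ range k, poi a j * poi e (k-j) := by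
      apply Finset.sum_nonneg
      intro j _
      exact mul_nonneg (poi_nonneg ha j) (poi_nonneg he _)
    rw [h1, h2, h3]
    linarith
  have hee : 0 ≤ 1 - Real.exp (-e) := by
    have := Real.exp_le_one_iff.2 (by linarith : -e ≤ 0)
    linarith
  have hptwise : ∀ k, |poi (a+e) k - poi a k|
      ≤ (poi (a+e) k - Real.exp (-e) * poi a k) + (1 - Real.exp (-e)) * poi a k := by
    intro k
    have hd : poi (a+e) k - poi a k
        = (poi (a+e) k - Real.exp (-e) * poi a k) - (1 - Real.exp (-e)) * poi a k := by ring
    rw [hd]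
    apply le_trans (abs_sub _ _)
    rw [abs_of_nonneg (hX k), abs_of_nonneg (mul_nonneg hee (poi_nonneg ha k))]
  have hsumX : Summable (fun k => (poi (a+e) k - Real.exp (-e) * poi a k)) :=
    (summable_poi (a+e)).sub ((summable_poi a).mul_left _)
  have hsum2 : Summable (fun k => (1 - Real.exp (-e)) * poi a k) := (summable_poi a).mul_left _
  have hsumabs : Summable (fun k => |poi (a+e) k - poi a k|) :=
    ((summable_poi (a+e)).sub (summable_poi a)).abs
  calc ∑' k, |poi (a+e) k - poi a k|
      ≤ ∑' k, ((poi (a+e) k - Real.exp (-e) * poi a k) + (1 - Real.exp (-e)) * poi a k) :=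
        Summable.tsum_le_tsum hptwise hsumabs (hsumX.add hsum2)
    _ = (∑' k, (poi (a+e) k - Real.exp (-e) * poi a k)) + ∑' k, (1 - Real.exp (-e)) * poi a k :=
        Summable.tsum_add hsumX hsum2
    _ = (1 - Real.exp (-e)) + (1 - Real.exp (-e)) := by
        rw [Summable.tsum_sub (summable_poi (a+e)) ((summable_poi a).mul_left _), tsum_mul_left,
          tsum_mul_left, tsum_poi, tsum_poi]
        ring
    _ ≤ 2*e := by
        have := Real.add_one_le_exp (-e)
        nlinarith [Real.exp_pos (-e)]

lemma poi_dist {a b : ℝ} (ha : 0 ≤ a) (hb : 0 ≤ b) :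
    ∑' k, |poi a k - poi b k| ≤ 2*|a - b| := by
  rcases le_total a b with h | h
  · have : b = a + (b - a) := by ring
    calc ∑' k, |poi a k - poi b k| = ∑' k, |poi (a + (b-a)) k - poi a k| := by
          apply tsum_congr; intro k
          rw [← this, abs_sub_comm]
      _ ≤ 2*(b-a) := poi_shift ha (by linarith)
      _ = 2*|a-b| := by rw [abs_of_nonpos (by linarith)]; ring
  · calc ∑' k, |poi a k - poi b k| = ∑' k, |poi (b + (a-b)) k - poi b k| := by
          apply tsum_congr; intro k
          rw [show b + (a-b) = a by ring]
      _ ≤ 2*(a-b) := poi_shift hb (by linarith)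
      _ = 2*|a-b| := by rw [abs_of_nonneg (by linarith)]; try ring

end PoiPoi


/-- For `n ≥ 1`, `0 ≤ κ ≤ n`, `b ≤ n_y ≤ n` and `μ_y ∈ [0,1]`, the total
variation distance between the binomial distribution with `n_y - b` trials and success
probability `κ/n` and the Poisson distribution with mean `κ·μ_y` is at most
`κ·((b+1)/n + |n_y/n − μ_y|)`. -/
theorem totalVariation_binomial_poisson_le
    (n : ℕ) (hn : 1 ≤ n) (κ : ℝ) (hκ0 : 0 ≤ κ) (hκn : κ ≤ (n : ℝ))
    (b ny : ℕ) (hb : b ≤ ny) (hny : ny ≤ n)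
    (μy : ℝ) (hμ0 : 0 ≤ μy) (hμ1 : μy ≤ 1) :
    (1 / 2) * ∑' k : ℕ,
        |binomialPMFReal (ny - b) (κ / n) k - poissonPMFReal' (κ * μy) k| ≤
      κ * (((b : ℝ) + 1) / n + |(ny : ℝ) / n - μy|) := by
  have hpoi : poissonPMFReal' = SteinTV.poi := rfl
  rw [hpoi]
  set m : ℕ := ny - b with hmdef
  set p : ℝ := κ / n with hpdef
  have hn0 : (0:ℝ) < n := by exact_mod_cast hn
  have hp0 : 0 ≤ p := by positivity
  have hp1 : p ≤ 1 := by rw [hpdef]; exact (div_le_one hn0).2 hκn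
  have hl1 : 0 ≤ (m:ℝ) * p := by positivity
  have hl2 : 0 ≤ κ * μy := by positivity
  have key1 := LemB.lemB m hp0 hp1
  have key2 := PoiPoi.poi_dist hl1 hl2
  have s1 : Summable (fun k => |binomialPMFReal m p k - SteinTV.poi ((m:ℝ)*p) k|) :=
    ((LemB.summable_bin m p).sub (LemB.summable_poi _)).abs
  have s2 : Summable (fun k => |SteinTV.poi ((m:ℝ)*p) k - SteinTV.poi (κ*μy) k|) :=
    ((LemB.summable_poi _).sub (LemB.summable_poi _)).abs
  have sabs : Summable (fun k => |binomialPMFReal m p k - SteinTV.poi (κ*μy) k|) :=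
    ((LemB.summable_bin m p).sub (LemB.summable_poi _)).abs
  have tri : ∑' k, |binomialPMFReal m p k - SteinTV.poi (κ*μy) k|
      ≤ (∑' k, |binomialPMFReal m p k - SteinTV.poi ((m:ℝ)*p) k|)
        + ∑' k, |SteinTV.poi ((m:ℝ)*p) k - SteinTV.poi (κ*μy) k| := by
    calc ∑' k, |binomialPMFReal m p k - SteinTV.poi (κ*μy) k|
        ≤ ∑' k, (|binomialPMFReal m p k - SteinTV.poi ((m:ℝ)*p) k|
            + |SteinTV.poi ((m:ℝ)*p) k - SteinTV.poi (κ*μy) k|) := by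
          apply Summable.tsum_le_tsum _ sabs (s1.add s2)
          intro k
          exact abs_sub_le _ _ _
      _ = _ := Summable.tsum_add s1 s2
  have hcast : ((m:ℕ):ℝ) = (ny:ℝ) - (b:ℝ) := by
    rw [hmdef]; push_cast [Nat.cast_sub hb]; ring
  have harith : ((m:ℕ):ℝ)*p - κ*μy = κ*((ny:ℝ)/n - μy) - κ*((b:ℝ)/n) := by
    rw [hcast, hpdef]
    field_simp
    ring
  have habs2 : |((m:ℕ):ℝ)*p - κ*μy| ≤ κ*((b:ℝ)/n) + κ*|(ny:ℝ)/n - μy| := by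
    rw [harith]
    calc |κ*((ny:ℝ)/n - μy) - κ*((b:ℝ)/n)|
        ≤ |κ*((ny:ℝ)/n - μy)| + |κ*((b:ℝ)/n)| := abs_sub _ _
      _ = κ*|(ny:ℝ)/n - μy| + κ*((b:ℝ)/n) := by
          rw [abs_mul, abs_mul, abs_of_nonneg hκ0, abs_of_nonneg (by positivity : (0:ℝ) ≤ (b:ℝ)/n)]
      _ = κ*((b:ℝ)/n) + κ*|(ny:ℝ)/n - μy| := by ring
  calc (1/2) * ∑' k, |binomialPMFReal m p k - SteinTV.poi (κ*μy) k|
      ≤ (1/2) * (2*p + 2*|((m:ℕ):ℝ)*p - κ*μy|) := by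
        apply mul_le_mul_of_nonneg_left _ (by norm_num)
        calc ∑' k, |binomialPMFReal m p k - SteinTV.poi (κ*μy) k|
            ≤ _ + _ := tri
          _ ≤ 2*p + 2*|((m:ℕ):ℝ)*p - κ*μy| := add_le_add key1 key2
    _ = p + |((m:ℕ):ℝ)*p - κ*μy| := by ring
    _ ≤ κ/n + (κ*((b:ℝ)/n) + κ*|(ny:ℝ)/n - μy|) := by
        rw [hpdef]
        exact add_le_add le_rfl habs2
    _ = κ * (((b:ℝ)+1)/n + |(ny:ℝ)/n - μy|) := by ring
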